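/- Define θ_A : Bool → ℝ by θ_A(false) = 0, θ_A(true) = π/8, and θ_B : Bool → ℝ by θ_B(false) = 0, θ_B(true) = −π/8. For an angle θ and an outcome bit a ∈ Bool, let u(θ, a) : Fin 2 → ℝ be the unit vector with u(θ,a)(0) = cos(θ + a·π/2) and u(θ,a)(1) = sin(θ + a·π/2), and let ψ : Fin 2 × Fin 2 → ℝ be the vector with ψ(i,j) = 1/√2 if i = j and 0 otherwise. Then (1/4) · ∑_{x,y ∈ Bool} ∑_{a,b ∈ Bool with xor a b = (x && y)} ( ∑_{i,j ∈ Fin 2} u(θ_A(x), a)(i) · u(θ_B(y), b)(j) · ψ(i,j) )² = (5 + √2)/8. -/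

import Mathlib

noncomputable def thetaA : Bool → ℝ := fun x => if x then Real.pi / 8 else 0

noncomputable def thetaB : Bool → ℝ := fun y => if y then -(Real.pi / 8) else 0

noncomputable def u (θ : ℝ) (a : Bool) : Fin 2 → ℝ :=
  fun i => if i = 0 then Real.cos (θ + (if a then 1 else 0) * (Real.pi / 2))
           else Real.sin (θ + (if a then 1 else 0) * (Real.pi / 2))

noncomputable def ψ : Fin 2 × Fin 2 → ℝ :=
  fun p => if p.1 = p.2 then 1 / Real.sqrt 2 else 0

theorem chsh_quantum_value :
    (1 / 4 : ℝ) * ∑ x : Bool, ∑ y : Bool, ∑ a : Bool, ∑ b : Bool,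
        (if xor a b = (x && y) then
          (∑ i : Fin 2, ∑ j : Fin 2, u (thetaA x) a i * u (thetaB y) b j * ψ (i, j)) ^ 2
         else 0)
      = (5 + Real.sqrt 2) / 8 := by
  have h2 : Real.sqrt 2 ^ 2 = 2 := Real.sq_sqrt (by norm_num)
  have h2pos : Real.sqrt 2 > 0 := Real.sqrt_pos.mpr (by norm_num)
  have hc : Real.cos (Real.pi/8) ^ 2 = (2 + Real.sqrt 2)/4 := by
    have h := Real.cos_sq (Real.pi/8)
    have h4 : 2 * (Real.pi/8) = Real.pi/4 := by ring
    rw [h4, Real.cos_pi_div_four] at h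
    rw [h]; ring
  have hs : Real.sin (Real.pi/8) ^ 2 = (2 - Real.sqrt 2)/4 := by
    nlinarith [Real.sin_sq_add_cos_sq (Real.pi/8)]
  have hsc : Real.sin (Real.pi/8) * Real.cos (Real.pi/8) = Real.sqrt 2 / 4 := by
    have h := Real.sin_two_mul (Real.pi/8)
    have h4 : 2 * (Real.pi/8) = Real.pi/4 := by ring
    rw [h4, Real.sin_pi_div_four] at h
    nlinarith [h]
  simp only [Fintype.sum_bool, Fin.sum_univ_two, u, ψ, thetaA, thetaB,
    if_true, if_false, Bool.xor_true, Bool.xor_false, Bool.and_true, Bool.and_false,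
    Real.cos_add, Real.sin_add, Real.cos_pi_div_two, Real.sin_pi_div_two,
    Real.cos_neg, Real.sin_neg, Real.cos_zero, Real.sin_zero]
  norm_num [-Real.cos_pi_div_eight, -Real.sin_pi_div_eight]
  generalize Real.cos (Real.pi/8) = c at *
  generalize Real.sin (Real.pi/8) = s at *
  generalize hr : Real.sqrt 2 = r at *
  field_simp
  have hr4 : r^4 = 4 := by nlinarith
  have hr8 : r^8 = 16 := by nlinarith
  have hr10 : r^10 = 32 := by nlinarith
  have e1 : s^2*c^2*r^8 = 2 := by
    have h : s^2*c^2*r^8 = (s*c)^2*r^8 := by ring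
    rw [h, hsc, hr8]; nlinarith
  have e2 : c^2*r^8 = 8 + 4*r := by linear_combination r^8 * hc + (2+r)/4 * hr8
  have e3 : c^2*r^10 = 16 + 8*r := by linear_combination r^10 * hc + (2+r)/4 * hr10
  have e4 : r^12 = 64 := by nlinarith
  have e5 : r^11 = 32*r := by linear_combination r * hr10
  ring_nf
  ring_nf at e1 e2 e3 e4 e5 hr10
  linear_combination 32*hc + 64*(s*c + r/4)*hsc + (-4*r-8)*h2
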